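/- For every b > 0, if s_b > 0 then β_ν(s_b) = b·s_b (Lemma 2.4, second part). -/

import Mathlib

open MeasureTheory Filter
open scoped ENNReal

noncomputable section

/-- The half-open unit cube `(0,1]^m`. -/
def unitCube (m : ℕ) : Set (Fin m → ℝ) := {x | ∀ i, x i ∈ Set.Ioc (0 : ℝ) 1}

/-- The half-open dyadic cube of generation `n` indexed by `l ∈ ℤ^m`. -/
def dyadicCube (m n : ℕ) (l : Fin m → ℤ) : Set (Fin m → ℝ) :=
  {x | ∀ i, x i ∈ Set.Ioc ((l i : ℝ) / 2 ^ n) (((l i : ℝ) + 1) / 2 ^ n)}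

/-- `β_n^ν(s) = log (∑_{C ∈ 𝒟_n} ν(C)^s) / log (2^n)`, the sum running over all
dyadic cubes of generation `n` with positive `ν`-measure. -/
def betaN (m : ℕ) (ν : Measure (Fin m → ℝ)) (n : ℕ) (s : ℝ) : ℝ :=
  Real.log (∑' l : {l : Fin m → ℤ // 0 < ν (dyadicCube m n l)},
      (ν (dyadicCube m n l.1)).toReal ^ s) / Real.log ((2 : ℝ) ^ n)

/-- The `L^q`-spectrum `β_ν(s) = limsup_n β_n^ν(s)`. -/
def lqSpectrum (m : ℕ) (ν : Measure (Fin m → ℝ)) (s : ℝ) : ℝ :=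
  limsup (fun n => betaN m ν n s) atTop

/-- `s_b = inf {s > 0 : β_ν(s) - b·s ≤ 0}`. -/
def sb (m : ℕ) (ν : Measure (Fin m → ℝ)) (b : ℝ) : ℝ :=
  sInf {s : ℝ | 0 < s ∧ lqSpectrum m ν s - b * s ≤ 0}

section Aux

variable {m : ℕ} (ν : Measure (Fin m → ℝ))

lemma aux_measurable_unitCube (m : ℕ) : MeasurableSet (unitCube m) := by
  have h : unitCube m = Set.pi Set.univ (fun _ : Fin m => Set.Ioc (0:ℝ) 1) := by
    ext x; simp [unitCube, Set.mem_pi]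
  rw [h]
  exact MeasurableSet.univ_pi fun _ => measurableSet_Ioc

lemma aux_compl_null [IsProbabilityMeasure ν] (hν : ν (unitCube m) = 1) :
    ν (unitCube m)ᶜ = 0 := by
  rw [measure_compl (aux_measurable_unitCube m) (measure_ne_top ν _), measure_univ, hν, tsub_self]

lemma aux_index_bounds [IsProbabilityMeasure ν] (hν : ν (unitCube m) = 1)
    {n : ℕ} {l : Fin m → ℤ} (h : 0 < ν (dyadicCube m n l)) (i : Fin m) :
    0 ≤ l i ∧ l i < 2 ^ n := by
  by_contra hc
  have hsub : dyadicCube m n l ⊆ (unitCube m)ᶜ := by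
    intro x hx hxU
    obtain ⟨hx1, hx2⟩ := hx i
    obtain ⟨hu1, hu2⟩ := hxU i
    have hp : (0:ℝ) < 2 ^ n := by positivity
    rw [not_and_or, not_le, not_lt] at hc
    rcases hc with hc | hc
    · have h1 : ((l i : ℝ) + 1) ≤ 0 := by
        have h2 : l i + 1 ≤ 0 := by omega
        exact_mod_cast h2
      have h3 : ((l i : ℝ) + 1) / 2 ^ n ≤ 0 := div_nonpos_of_nonpos_of_nonneg h1 hp.le
      linarith
    · have h1 : (2:ℝ) ^ n ≤ (l i : ℝ) := by exact_mod_cast hc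
      have h2 : (1:ℝ) ≤ (l i : ℝ) / 2 ^ n := (one_le_div hp).mpr h1
      linarith
  have h0 : ν (dyadicCube m n l) = 0 := by
    have := measure_mono (μ := ν) hsub
    rw [aux_compl_null ν hν] at this
    exact le_antisymm this zero_le
  exact absurd h0 h.ne'

lemma aux_cover (n : ℕ) : unitCube m ⊆ ⋃ l : Fin m → ℤ, dyadicCube m n l := by
  intro x hx
  refine Set.mem_iUnion.mpr ⟨fun i => ⌈x i * 2 ^ n⌉ - 1, fun i => ?_⟩
  have hp : (0:ℝ) < 2 ^ n := by positivity
  have hc1 := Int.ceil_lt_add_one (x i * 2 ^ n)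
  have hc2 := Int.le_ceil (x i * 2 ^ n)
  constructor
  · push_cast
    rw [div_lt_iff₀ hp]
    linarith
  · push_cast
    rw [le_div_iff₀ hp]
    linarith

lemma aux_supp_finite [IsProbabilityMeasure ν] (hν : ν (unitCube m) = 1) (n : ℕ) :
    {l : Fin m → ℤ | 0 < ν (dyadicCube m n l)}.Finite := by
  apply Set.Finite.subset (Set.Finite.pi (fun _ : Fin m => Set.finite_Ico (0:ℤ) (2 ^ n)))
  intro l hl
  simp only [Set.mem_pi, Set.mem_univ, Set.mem_Ico, forall_true_left]
  exact fun i => aux_index_bounds ν hν hl i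

lemma aux_supp_nonempty [IsProbabilityMeasure ν] (hν : ν (unitCube m) = 1) (n : ℕ) :
    ∃ l, 0 < ν (dyadicCube m n l) := by
  by_contra hc
  push_neg at hc
  have h0 : ν (⋃ l : Fin m → ℤ, dyadicCube m n l) = 0 :=
    measure_iUnion_null fun l => le_antisymm (hc l) zero_le
  have h1 := measure_mono (μ := ν) (aux_cover (m := m) n)
  rw [h0, hν] at h1
  simp at h1

lemma aux_card_le [IsProbabilityMeasure ν] (hν : ν (unitCube m) = 1) (n : ℕ) :
    Nat.card {l : Fin m → ℤ // 0 < ν (dyadicCube m n l)} ≤ 2 ^ (n * m) := by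
  have h2 : (0:ℕ) < 2 ^ n := by positivity
  have hinj : Function.Injective
      (fun (l : {l : Fin m → ℤ // 0 < ν (dyadicCube m n l)}) (i : Fin m) =>
        (⟨(l.1 i).toNat, by
          have := (aux_index_bounds ν hν l.2 i).2
          rw [Int.toNat_lt' (by positivity)]
          exact_mod_cast this⟩ : Fin (2 ^ n))) := by
    intro l l' hll
    ext i
    have h1 := congrFun hll i
    have e1 := (aux_index_bounds ν hν l.2 i).1
    have e2 := (aux_index_bounds ν hν l'.2 i).1
    have : (l.1 i).toNat = (l'.1 i).toNat := by simpa using h1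
    omega
  calc Nat.card {l : Fin m → ℤ // 0 < ν (dyadicCube m n l)}
      ≤ Nat.card (Fin m → Fin (2 ^ n)) := Nat.card_le_card_of_injective _ hinj
    _ = 2 ^ (n * m) := by
        simp [Nat.card_eq_fintype_card, Fintype.card_fun, pow_mul]

lemma aux_exists_big [IsProbabilityMeasure ν] (hν : ν (unitCube m) = 1) (n : ℕ) :
    ∃ l : {l : Fin m → ℤ // 0 < ν (dyadicCube m n l)},
      ((2:ℝ) ^ (n * m))⁻¹ ≤ (ν (dyadicCube m n l.1)).toReal := by
  haveI : Fintype {l : Fin m → ℤ // 0 < ν (dyadicCube m n l)} :=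
    (aux_supp_finite ν hν n).fintype
  haveI : Nonempty {l : Fin m → ℤ // 0 < ν (dyadicCube m n l)} := by
    obtain ⟨l, hl⟩ := aux_supp_nonempty ν hν n
    exact ⟨⟨l, hl⟩⟩
  have h1 : (1:ℝ≥0∞) ≤ ∑' l : Fin m → ℤ, ν (dyadicCube m n l) := by
    calc (1:ℝ≥0∞) = ν (unitCube m) := hν.symm
      _ ≤ ν (⋃ l : Fin m → ℤ, dyadicCube m n l) := measure_mono (aux_cover (m := m) n)
      _ ≤ ∑' l : Fin m → ℤ, ν (dyadicCube m n l) := measure_iUnion_le _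
  have h2 : ∑' l : {l : Fin m → ℤ // 0 < ν (dyadicCube m n l)}, ν (dyadicCube m n l.1)
      = ∑' l : Fin m → ℤ, ν (dyadicCube m n l) := by
    exact tsum_subtype_eq_of_support_subset
      (f := fun l : Fin m → ℤ => ν (dyadicCube m n l))
      (s := {l : Fin m → ℤ | 0 < ν (dyadicCube m n l)})
      (fun l hl => pos_iff_ne_zero.mpr hl)
  rw [← h2, tsum_fintype] at h1
  obtain ⟨l₀, -, hmax⟩ := Finset.exists_max_image Finset.univ
    (fun l : {l : Fin m → ℤ // 0 < ν (dyadicCube m n l)} => ν (dyadicCube m n l.1))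
    ⟨Classical.arbitrary _, Finset.mem_univ _⟩
  refine ⟨l₀, ?_⟩
  set N := Fintype.card {l : Fin m → ℤ // 0 < ν (dyadicCube m n l)} with hN
  have h3 : (1:ℝ≥0∞) ≤ N * ν (dyadicCube m n l₀.1) := by
    calc (1:ℝ≥0∞) ≤ ∑ l : {l : Fin m → ℤ // 0 < ν (dyadicCube m n l)},
          ν (dyadicCube m n l.1) := h1
      _ ≤ Finset.univ.card • ν (dyadicCube m n l₀.1) :=
          Finset.sum_le_card_nsmul _ _ _ (fun l _ => hmax l (Finset.mem_univ l))
      _ = N * ν (dyadicCube m n l₀.1) := by rw [nsmul_eq_mul, Finset.card_univ]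
  have hNle : (N : ℝ≥0∞) ≤ 2 ^ (n * m) := by
    have := aux_card_le ν hν n
    rw [hN, ← Nat.card_eq_fintype_card]
    exact_mod_cast Nat.cast_le.mpr this
  have h4 : (1:ℝ≥0∞) ≤ 2 ^ (n * m) * ν (dyadicCube m n l₀.1) :=
    h3.trans (mul_le_mul_left hNle _)
  have hpow0 : ((2:ℝ≥0∞) ^ (n * m)) ≠ 0 := by positivity
  have hpowt : ((2:ℝ≥0∞) ^ (n * m)) ≠ ⊤ := by
    exact ENNReal.pow_ne_top ENNReal.ofNat_ne_top
  have h5 : ((2:ℝ≥0∞) ^ (n * m))⁻¹ ≤ ν (dyadicCube m n l₀.1) := by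
    have := mul_le_mul_right h4 ((2:ℝ≥0∞) ^ (n * m))⁻¹
    rwa [mul_one, ← mul_assoc, ENNReal.inv_mul_cancel hpow0 hpowt, one_mul] at this
  have h6 := ENNReal.toReal_mono (measure_ne_top ν _) h5
  rwa [ENNReal.toReal_inv, ENNReal.toReal_pow, ENNReal.toReal_ofNat] at h6

lemma aux_tsum_pos [IsProbabilityMeasure ν] (hν : ν (unitCube m) = 1) (n : ℕ) (s : ℝ) :
    0 < ∑' l : {l : Fin m → ℤ // 0 < ν (dyadicCube m n l)},
      (ν (dyadicCube m n l.1)).toReal ^ s := by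
  haveI : Fintype {l : Fin m → ℤ // 0 < ν (dyadicCube m n l)} :=
    (aux_supp_finite ν hν n).fintype
  haveI : Nonempty {l : Fin m → ℤ // 0 < ν (dyadicCube m n l)} := by
    obtain ⟨l, hl⟩ := aux_supp_nonempty ν hν n
    exact ⟨⟨l, hl⟩⟩
  rw [tsum_fintype]
  exact Finset.sum_pos
    (fun l _ => Real.rpow_pos_of_pos (ENNReal.toReal_pos l.2.ne' (measure_ne_top ν _)) s)
    Finset.univ_nonempty

lemma aux_toReal_le_one [IsProbabilityMeasure ν] {n : ℕ} (l : Fin m → ℤ) :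
    (ν (dyadicCube m n l)).toReal ≤ 1 := by
  rw [← ENNReal.toReal_one]
  exact ENNReal.toReal_mono ENNReal.one_ne_top prob_le_one

lemma aux_tsum_le [IsProbabilityMeasure ν] (hν : ν (unitCube m) = 1) (n : ℕ) {s : ℝ}
    (hs : 0 ≤ s) :
    ∑' l : {l : Fin m → ℤ // 0 < ν (dyadicCube m n l)},
      (ν (dyadicCube m n l.1)).toReal ^ s ≤ (2:ℝ) ^ (n * m) := by
  haveI : Fintype {l : Fin m → ℤ // 0 < ν (dyadicCube m n l)} :=
    (aux_supp_finite ν hν n).fintype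
  rw [tsum_fintype]
  calc ∑ l : {l : Fin m → ℤ // 0 < ν (dyadicCube m n l)}, (ν (dyadicCube m n l.1)).toReal ^ s
      ≤ ∑ _l : {l : Fin m → ℤ // 0 < ν (dyadicCube m n l)}, (1:ℝ) :=
        Finset.sum_le_sum fun l _ =>
          Real.rpow_le_one ENNReal.toReal_nonneg (aux_toReal_le_one ν l.1) hs
    _ = (Fintype.card {l : Fin m → ℤ // 0 < ν (dyadicCube m n l)} : ℝ) := by
        simp
    _ ≤ (2:ℝ) ^ (n * m) := by
        have := aux_card_le ν hν n
        rw [← Nat.card_eq_fintype_card]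
        calc (Nat.card {l : Fin m → ℤ // 0 < ν (dyadicCube m n l)} : ℝ)
            ≤ ((2 ^ (n * m) : ℕ) : ℝ) := Nat.cast_le.mpr this
          _ = (2:ℝ) ^ (n * m) := by push_cast; ring

lemma aux_tsum_ge [IsProbabilityMeasure ν] (hν : ν (unitCube m) = 1) (n : ℕ) {s : ℝ}
    (hs : 0 ≤ s) :
    (((2:ℝ) ^ (n * m))⁻¹) ^ s ≤
      ∑' l : {l : Fin m → ℤ // 0 < ν (dyadicCube m n l)},
        (ν (dyadicCube m n l.1)).toReal ^ s := by
  haveI : Fintype {l : Fin m → ℤ // 0 < ν (dyadicCube m n l)} :=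
    (aux_supp_finite ν hν n).fintype
  obtain ⟨l₀, hl₀⟩ := aux_exists_big ν hν n
  rw [tsum_fintype]
  calc (((2:ℝ) ^ (n * m))⁻¹) ^ s ≤ (ν (dyadicCube m n l₀.1)).toReal ^ s :=
        Real.rpow_le_rpow (by positivity) hl₀ hs
    _ ≤ ∑ l : {l : Fin m → ℤ // 0 < ν (dyadicCube m n l)}, (ν (dyadicCube m n l.1)).toReal ^ s :=
        Finset.single_le_sum
          (f := fun l : {l : Fin m → ℤ // 0 < ν (dyadicCube m n l)} =>
            (ν (dyadicCube m n l.1)).toReal ^ s)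
          (fun l _ => Real.rpow_nonneg ENNReal.toReal_nonneg s) (Finset.mem_univ l₀)

lemma aux_tsum_anti [IsProbabilityMeasure ν] (hν : ν (unitCube m) = 1) (n : ℕ) {s t : ℝ}
    (hst : s ≤ t) :
    ∑' l : {l : Fin m → ℤ // 0 < ν (dyadicCube m n l)}, (ν (dyadicCube m n l.1)).toReal ^ t
      ≤ ∑' l : {l : Fin m → ℤ // 0 < ν (dyadicCube m n l)},
          (ν (dyadicCube m n l.1)).toReal ^ s := by
  haveI : Fintype {l : Fin m → ℤ // 0 < ν (dyadicCube m n l)} :=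
    (aux_supp_finite ν hν n).fintype
  rw [tsum_fintype, tsum_fintype]
  exact Finset.sum_le_sum fun l _ =>
    Real.rpow_le_rpow_of_exponent_ge (ENNReal.toReal_pos l.2.ne' (measure_ne_top ν _))
      (aux_toReal_le_one ν l.1) hst

lemma aux_tsum_holder [IsProbabilityMeasure ν] (hν : ν (unitCube m) = 1) (n : ℕ) {s t : ℝ}
    (hs : 0 < s) (hst : s < t) :
    Real.log (∑' l : {l : Fin m → ℤ // 0 < ν (dyadicCube m n l)},
        (ν (dyadicCube m n l.1)).toReal ^ s)
      ≤ (1 - s / t) * ((n * m : ℕ) * Real.log 2)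
        + (s / t) * Real.log (∑' l : {l : Fin m → ℤ // 0 < ν (dyadicCube m n l)},
            (ν (dyadicCube m n l.1)).toReal ^ t) := by
  haveI : Fintype {l : Fin m → ℤ // 0 < ν (dyadicCube m n l)} :=
    (aux_supp_finite ν hν n).fintype
  haveI : Nonempty {l : Fin m → ℤ // 0 < ν (dyadicCube m n l)} := by
    obtain ⟨l, hl⟩ := aux_supp_nonempty ν hν n
    exact ⟨⟨l, hl⟩⟩
  have ht : 0 < t := hs.trans hst
  set S := ∑' l : {l : Fin m → ℤ // 0 < ν (dyadicCube m n l)},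
    (ν (dyadicCube m n l.1)).toReal ^ s with hS
  set T := ∑' l : {l : Fin m → ℤ // 0 < ν (dyadicCube m n l)},
    (ν (dyadicCube m n l.1)).toReal ^ t with hT
  have hSpos : 0 < S := aux_tsum_pos ν hν n s
  have hTpos : 0 < T := aux_tsum_pos ν hν n t
  set N := Fintype.card {l : Fin m → ℤ // 0 < ν (dyadicCube m n l)} with hNdef
  have hN0 : 0 < N := Fintype.card_pos
  have hNR : (0:ℝ) < N := by exact_mod_cast hN0
  -- Hölder / power-mean inequality
  have key : (N:ℝ)⁻¹ * S ≤ ((N:ℝ)⁻¹ * T) ^ (s / t) := by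
    have h := Real.arith_mean_le_rpow_mean (p := t / s) Finset.univ
      (fun _ : {l : Fin m → ℤ // 0 < ν (dyadicCube m n l)} => (N:ℝ)⁻¹)
      (fun l => (ν (dyadicCube m n l.1)).toReal ^ s)
      (fun _ _ => by positivity)
      (by simp [Finset.sum_const, Finset.card_univ, hNdef.symm])
      (fun l _ => Real.rpow_nonneg ENNReal.toReal_nonneg s)
      ((one_le_div hs).mpr hst.le)
    have hrw : ∀ l : {l : Fin m → ℤ // 0 < ν (dyadicCube m n l)},
        ((ν (dyadicCube m n l.1)).toReal ^ s) ^ (t / s) = (ν (dyadicCube m n l.1)).toReal ^ t := by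
      intro l
      rw [← Real.rpow_mul ENNReal.toReal_nonneg]
      congr 1
      field_simp
    rw [← Finset.mul_sum, ← Finset.mul_sum] at h
    simp only [hrw] at h
    rw [one_div_div] at h
    rw [hS, hT, tsum_fintype, tsum_fintype]
    exact h
  have hlog := Real.log_le_log (by positivity) key
  rw [Real.log_mul (by positivity) hSpos.ne', Real.log_rpow (by positivity),
    Real.log_mul (by positivity) hTpos.ne', Real.log_inv] at hlog
  have hlogN : Real.log N ≤ (n * m : ℕ) * Real.log 2 := by
    have h1 : (N:ℝ) ≤ (2:ℝ) ^ (n * m) := by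
      have := aux_card_le ν hν n
      rw [hNdef, ← Nat.card_eq_fintype_card]
      calc (Nat.card {l : Fin m → ℤ // 0 < ν (dyadicCube m n l)} : ℝ)
          ≤ ((2 ^ (n * m) : ℕ) : ℝ) := Nat.cast_le.mpr this
        _ = (2:ℝ) ^ (n * m) := by push_cast; ring
    calc Real.log N ≤ Real.log ((2:ℝ) ^ (n * m)) := Real.log_le_log hNR h1
      _ = (n * m : ℕ) * Real.log 2 := by rw [Real.log_pow]
  have hθ : 0 ≤ 1 - s / t := by
    have : s / t ≤ 1 := (div_le_one ht).mpr hst.le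
    linarith
  nlinarith [mul_le_mul_of_nonneg_left hlogN hθ]

lemma aux_log_two_pow_pos {n : ℕ} (hn : 0 < n) : 0 < Real.log ((2:ℝ) ^ n) := by
  rw [Real.log_pow]
  have h2 : 0 < Real.log 2 := Real.log_pos (by norm_num)
  positivity

lemma aux_betaN_le [IsProbabilityMeasure ν] (hν : ν (unitCube m) = 1) (n : ℕ) {s : ℝ}
    (hs : 0 ≤ s) : betaN m ν n s ≤ m := by
  rcases Nat.eq_zero_or_pos n with hn | hn
  · subst hn
    simp [betaN]
  · have hD := aux_log_two_pow_pos hn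
    rw [betaN, div_le_iff₀ hD]
    calc Real.log (∑' l : {l : Fin m → ℤ // 0 < ν (dyadicCube m n l)},
            (ν (dyadicCube m n l.1)).toReal ^ s)
        ≤ Real.log ((2:ℝ) ^ (n * m)) :=
          Real.log_le_log (aux_tsum_pos ν hν n s) (aux_tsum_le ν hν n hs)
      _ = (m:ℝ) * Real.log ((2:ℝ) ^ n) := by
          rw [Real.log_pow, Real.log_pow]; push_cast; ring

lemma aux_betaN_ge [IsProbabilityMeasure ν] (hν : ν (unitCube m) = 1) (n : ℕ) {s : ℝ}
    (hs : 0 ≤ s) : -(m * s) ≤ betaN m ν n s := by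
  rcases Nat.eq_zero_or_pos n with hn | hn
  · subst hn
    simp only [betaN, pow_zero, Real.log_one, div_zero]
    have : (0:ℝ) ≤ m * s := by positivity
    linarith
  · have hD := aux_log_two_pow_pos hn
    rw [betaN, le_div_iff₀ hD]
    calc -(m * s) * Real.log ((2:ℝ) ^ n)
        = Real.log ((((2:ℝ) ^ (n * m))⁻¹) ^ s) := by
          rw [Real.log_rpow (by positivity), Real.log_inv, Real.log_pow, Real.log_pow]
          push_cast; ring
      _ ≤ Real.log (∑' l : {l : Fin m → ℤ // 0 < ν (dyadicCube m n l)},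
            (ν (dyadicCube m n l.1)).toReal ^ s) :=
          Real.log_le_log (by positivity) (aux_tsum_ge ν hν n hs)

lemma aux_betaN_anti [IsProbabilityMeasure ν] (hν : ν (unitCube m) = 1) (n : ℕ) {s t : ℝ}
    (hst : s ≤ t) : betaN m ν n t ≤ betaN m ν n s := by
  rcases Nat.eq_zero_or_pos n with hn | hn
  · subst hn
    simp [betaN]
  · have hD := aux_log_two_pow_pos hn
    rw [betaN, betaN, div_le_div_iff_of_pos_right hD]
    exact Real.log_le_log (aux_tsum_pos ν hν n t) (aux_tsum_anti ν hν n hst)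

lemma aux_betaN_holder [IsProbabilityMeasure ν] (hν : ν (unitCube m) = 1) (n : ℕ) {s t : ℝ}
    (hs : 0 < s) (hst : s < t) :
    betaN m ν n s ≤ (s / t) * betaN m ν n t + (1 - s / t) * m := by
  have ht : 0 < t := hs.trans hst
  have hθ0 : 0 < s / t := by positivity
  have hθ1 : s / t ≤ 1 := (div_le_one ht).mpr hst.le
  rcases Nat.eq_zero_or_pos n with hn | hn
  · subst hn
    simp only [betaN, pow_zero, Real.log_one, div_zero, mul_zero, zero_add]
    have : (0:ℝ) ≤ (1 - s / t) * m := by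
      apply mul_nonneg (by linarith) (by positivity)
    linarith
  · have hD := aux_log_two_pow_pos hn
    have key := aux_tsum_holder ν hν n hs hst
    rw [betaN, betaN, div_le_iff₀ hD]
    have hexp : ((s / t) * (Real.log (∑' l : {l : Fin m → ℤ // 0 < ν (dyadicCube m n l)},
          (ν (dyadicCube m n l.1)).toReal ^ t) / Real.log ((2:ℝ) ^ n)) + (1 - s / t) * m)
          * Real.log ((2:ℝ) ^ n)
        = (s / t) * Real.log (∑' l : {l : Fin m → ℤ // 0 < ν (dyadicCube m n l)},
            (ν (dyadicCube m n l.1)).toReal ^ t)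
          + (1 - s / t) * (m * Real.log ((2:ℝ) ^ n)) := by
      field_simp
    rw [hexp]
    have hlog2 : (m:ℝ) * Real.log ((2:ℝ) ^ n) = (n * m : ℕ) * Real.log 2 := by
      rw [Real.log_pow]; push_cast; ring
    rw [hlog2]
    linarith [key]

lemma aux_bddAbove [IsProbabilityMeasure ν] (hν : ν (unitCube m) = 1) {s : ℝ} (hs : 0 ≤ s) :
    IsBoundedUnder (· ≤ ·) atTop (fun n => betaN m ν n s) :=
  isBoundedUnder_of ⟨(m:ℝ), fun n => aux_betaN_le ν hν n hs⟩

lemma aux_cobdd [IsProbabilityMeasure ν] (hν : ν (unitCube m) = 1) {s : ℝ} (hs : 0 ≤ s) :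
    IsCoboundedUnder (· ≤ ·) atTop (fun n => betaN m ν n s) :=
  isCoboundedUnder_le_of_le atTop (x := -(m * s)) fun n => aux_betaN_ge ν hν n hs

lemma aux_beta_le [IsProbabilityMeasure ν] (hν : ν (unitCube m) = 1) {s : ℝ} (hs : 0 ≤ s) :
    lqSpectrum m ν s ≤ m :=
  limsup_le_of_le (aux_cobdd ν hν hs) (Eventually.of_forall fun n => aux_betaN_le ν hν n hs)

lemma aux_beta_ge [IsProbabilityMeasure ν] (hν : ν (unitCube m) = 1) {s : ℝ} (hs : 0 ≤ s) :
    -(m * s) ≤ lqSpectrum m ν s := by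
  apply le_limsup_of_le (aux_bddAbove ν hν hs)
  intro c hc
  obtain ⟨n, hn⟩ := hc.exists
  exact (aux_betaN_ge ν hν n hs).trans hn

lemma aux_beta_anti [IsProbabilityMeasure ν] (hν : ν (unitCube m) = 1) {s t : ℝ} (hs : 0 ≤ s)
    (hst : s ≤ t) : lqSpectrum m ν t ≤ lqSpectrum m ν s :=
  limsup_le_limsup (Eventually.of_forall fun n => aux_betaN_anti ν hν n hst)
    (aux_cobdd ν hν (hs.trans hst)) (aux_bddAbove ν hν hs)

lemma aux_beta_holder [IsProbabilityMeasure ν] (hν : ν (unitCube m) = 1) {s t : ℝ}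
    (hs : 0 < s) (hst : s < t) :
    lqSpectrum m ν s ≤ (s / t) * lqSpectrum m ν t + (1 - s / t) * m := by
  have ht : 0 < t := hs.trans hst
  have hθ0 : 0 < s / t := by positivity
  apply le_of_forall_pos_le_add
  intro ε hε
  set ε' := ε * t / s with hε'
  have hε'0 : 0 < ε' := by positivity
  have hev : ∀ᶠ n in atTop, betaN m ν n t < lqSpectrum m ν t + ε' :=
    eventually_lt_of_limsup_lt (lt_add_of_pos_right _ hε'0) (aux_bddAbove ν hν ht.le)
  apply limsup_le_of_le (aux_cobdd ν hν hs.le)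
  filter_upwards [hev] with n hn
  calc betaN m ν n s ≤ (s / t) * betaN m ν n t + (1 - s / t) * m :=
        aux_betaN_holder ν hν n hs hst
    _ ≤ (s / t) * (lqSpectrum m ν t + ε') + (1 - s / t) * m :=
        add_le_add_left (mul_le_mul_of_nonneg_left hn.le hθ0.le) _
    _ = (s / t) * lqSpectrum m ν t + (1 - s / t) * m + ε := by
        rw [hε']
        field_simp
        ring

end Aux

open scoped Topology

/-- **Lemma 2.4, second part**: if `s_b > 0` then `β_ν(s_b) = b · s_b`. -/
theorem statement5 (m : ℕ) (hm : 0 < m) (ν : Measure (Fin m → ℝ))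
    [IsProbabilityMeasure ν] (hν : ν (unitCube m) = 1) (b : ℝ) (hb : 0 < b)
    (hsb : 0 < sb m ν b) :
    lqSpectrum m ν (sb m ν b) = b * sb m ν b := by
  set A := {s : ℝ | 0 < s ∧ lqSpectrum m ν s - b * s ≤ 0} with hA
  set s₀ := sb m ν b with hs₀def
  have hs₀Inf : s₀ = sInf A := rfl
  have hAne : A.Nonempty := by
    refine ⟨((m:ℝ) + 1) / b, ?_, ?_⟩
    · positivity
    · have h1 : lqSpectrum m ν (((m:ℝ) + 1) / b) ≤ m := aux_beta_le ν hν (by positivity)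
      have h2 : b * (((m:ℝ) + 1) / b) = (m:ℝ) + 1 := by field_simp
      rw [h2]
      linarith
  have hAbdd : BddBelow A := ⟨0, fun s hs => hs.1.le⟩
  have hnotA : ∀ s, 0 < s → s < s₀ → b * s < lqSpectrum m ν s := by
    intro s hs hlt
    by_contra hcon
    push_neg at hcon
    have hmem : s ∈ A := ⟨hs, by linarith⟩
    rw [hs₀Inf] at hlt
    exact absurd (csInf_le hAbdd hmem) (not_le.mpr hlt)
  have hbound : ∀ t, s₀ < t → lqSpectrum m ν t ≤ b * t := by
    intro t hts
    rw [hs₀Inf] at hts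
    obtain ⟨u, huA, hut⟩ := (csInf_lt_iff hAbdd hAne).mp hts
    have h1 : lqSpectrum m ν t ≤ lqSpectrum m ν u := aux_beta_anti ν hν huA.1.le hut.le
    have h2 : lqSpectrum m ν u ≤ b * u := by linarith [huA.2]
    nlinarith [huA.1]
  have hupper : lqSpectrum m ν s₀ ≤ b * s₀ := by
    refine ge_of_tendsto (f := fun t => b * s₀ + (1 - s₀ / t) * m)
      (x := 𝓝[>] s₀) ?_ ?_
    · have hc : ContinuousAt (fun t => b * s₀ + (1 - s₀ / t) * (m:ℝ)) s₀ :=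
        continuousAt_const.add
          ((continuousAt_const.sub (continuousAt_const.div continuousAt_id hsb.ne')).mul
            continuousAt_const)
      have := hc.tendsto.mono_left (nhdsWithin_le_nhds (s := Set.Ioi s₀))
      simpa [div_self hsb.ne'] using this
    · apply eventually_nhdsWithin_of_forall
      intro t ht
      have ht' : s₀ < t := ht
      have ht0 : 0 < t := hsb.trans ht'
      have h1 : lqSpectrum m ν s₀ ≤ (s₀ / t) * lqSpectrum m ν t + (1 - s₀ / t) * m :=
        aux_beta_holder ν hν hsb ht'
      have h2 : (s₀ / t) * lqSpectrum m ν t ≤ (s₀ / t) * (b * t) :=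
        mul_le_mul_of_nonneg_left (hbound t ht') (by positivity)
      have h3 : (s₀ / t) * (b * t) = b * s₀ := by field_simp
      linarith
  have hlower : b * s₀ ≤ lqSpectrum m ν s₀ := by
    have htend1 : Tendsto (fun t => b * t) (𝓝[<] s₀) (𝓝 (b * s₀)) :=
      ((continuous_const.mul continuous_id).tendsto s₀).mono_left nhdsWithin_le_nhds
    have htend2 : Tendsto (fun t => (t / s₀) * lqSpectrum m ν s₀ + (1 - t / s₀) * (m:ℝ))
        (𝓝[<] s₀) (𝓝 (lqSpectrum m ν s₀)) := by
      have hc : ContinuousAt (fun t => (t / s₀) * lqSpectrum m ν s₀ + (1 - t / s₀) * (m:ℝ)) s₀ :=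
        ((continuousAt_id.div continuousAt_const hsb.ne').mul continuousAt_const).add
          ((continuousAt_const.sub (continuousAt_id.div continuousAt_const hsb.ne')).mul
            continuousAt_const)
      have := hc.tendsto.mono_left (nhdsWithin_le_nhds (s := Set.Iio s₀))
      simpa [div_self hsb.ne'] using this
    refine le_of_tendsto_of_tendsto htend1 htend2 ?_
    apply Filter.eventually_of_mem (Ioo_mem_nhdsLT_of_mem (Set.mem_Ioc.mpr ⟨hsb, le_refl s₀⟩))
    intro t ht
    have h1 := hnotA t ht.1 ht.2
    have h2 : lqSpectrum m ν t ≤ (t / s₀) * lqSpectrum m ν s₀ + (1 - t / s₀) * m :=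
      aux_beta_holder ν hν ht.1 ht.2
    have : b * t ≤ (t / s₀) * lqSpectrum m ν s₀ + (1 - t / s₀) * (m:ℝ) := by linarith
    exact this
  linarith
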